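/- Let u, v, w be words and let d be a cyclic permutation of u * v. Then there exist words p, q, w', f, h such that: (a) either p is the reduced form of a cyclic permutation of u and q is a cyclic permutation of v, or p is the reduced form of a cyclic permutation of v and q is a cyclic permutation of u; (b) w' is a cyclic permutation of w; (c) f is a cyclic permutation of q * w'; and d * w is a cyclic permutation of p * (h f h⁻¹); moreover, if h is non-empty then p * (h f h⁻¹) equals the concatenation p h f h⁻¹ (i.e., it is already cyclically reduced). -/

import Mathlib

/-- Words over `X ∪ X⁻¹`: elements of the free monoid on `α × Bool`. -/
abbrev Word (α : Type*) := List (α × Bool)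

/-- The formal inverse of a word. -/
def wInv {α : Type*} (w : Word α) : Word α := FreeGroup.invRev w

/-- `u` is a cyclic permutation of `v`. -/
def IsCycPerm {α : Type*} (u v : Word α) : Prop :=
  ∃ a b : Word α, v = a ++ b ∧ u = b ++ a

variable {α : Type*} [DecidableEq α]

/-- A word is reduced if it is fixed by free reduction. -/
def Reduced (w : Word α) : Prop := FreeGroup.reduce w = w

/-- Auxiliary, fuelled computation of the cyclically reduced form of a
reduced word: repeatedly peel off a first letter that is inverse to the
last letter. -/
def cyclicReduceAux : ℕ → Word α → Word α
  | 0, w => w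
  | n + 1, [] => []
  | n + 1, x :: xs =>
      if xs.getLast? = some (x.1, !x.2) then cyclicReduceAux n xs.dropLast
      else x :: xs

/-- The cyclically reduced form `ρ̂(w)` of a word `w`. -/
def cyclicReduce (w : Word α) : Word α :=
  cyclicReduceAux w.length (FreeGroup.reduce w)

/-- The cyclically reduced product `u * v := ρ̂(uv)`. -/
def crp (u v : Word α) : Word α := cyclicReduce (u ++ v)

----------------------------------------------------------------
-- Auxiliary development
----------------------------------------------------------------

namespace TA

open List

/-- inverse of a letter -/
def invL {α : Type*} (x : α × Bool) : α × Bool := (x.1, !x.2)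

@[simp] lemma invL_invL {α : Type*} (x : α × Bool) : invL (invL x) = x := by
  simp [invL]

lemma invL_eq_iff {α : Type*} {x y : α × Bool} : invL x = y ↔ x = invL y := by
  constructor <;> rintro rfl <;> simp

/-- the no-cancellation relation between adjacent letters -/
def NR {α : Type*} (x y : α × Bool) : Prop := y ≠ invL x

lemma nr_comm {α : Type*} {x y : α × Bool} : NR x y ↔ NR y x := by
  unfold NR
  constructor <;> intro h hc <;> apply h <;> rw [hc] <;> simp

lemma wInv_append (a b : Word α) : wInv (a ++ b) = wInv b ++ wInv a := by
  simp [wInv, FreeGroup.invRev]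

lemma wInv_singleton (x : α × Bool) : wInv [x] = [invL x] := by
  simp [wInv, FreeGroup.invRev, invL]

@[simp] lemma wInv_nil : wInv ([] : Word α) = [] := rfl

lemma wInv_cons (x : α × Bool) (a : Word α) : wInv (x :: a) = wInv a ++ [invL x] := by
  rw [show x :: a = [x] ++ a from rfl, wInv_append, wInv_singleton]

@[simp] lemma wInv_length (a : Word α) : (wInv a).length = a.length := by
  simp [wInv, FreeGroup.invRev]

/-- cancelling condition in `FreeGroup.reduce` means the letters are mutually inverse -/
lemma cancel_iff {x y : α × Bool} : (x.1 = y.1 ∧ x.2 = !y.2) ↔ x = invL y := by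
  constructor
  · rintro ⟨h1, h2⟩; cases x; cases y; simp_all [invL]
  · rintro rfl; simp [invL]

lemma reduced_length_le (w : Word α) : (FreeGroup.reduce w).length ≤ w.length :=
  FreeGroup.Red.length_le FreeGroup.reduce.red

lemma reduced_cons_down {x : α × Bool} {xs : Word α}
    (h : Reduced (x :: xs)) : Reduced xs := by
  unfold Reduced at *
  rw [FreeGroup.reduce.cons] at h
  rcases hr : FreeGroup.reduce xs with - | ⟨hd, tl⟩
  · rw [hr] at h
    simp only at h
    cases h; rfl
  · rw [hr] at h
    simp only at h
    by_cases hc : x.1 = hd.1 ∧ x.2 = !hd.2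
    · rw [if_pos hc] at h
      exfalso
      have h1 : tl.length = xs.length + 1 := by rw [h]; simp
      have h2 : (hd :: tl).length ≤ xs.length := by
        rw [← hr]; exact reduced_length_le xs
      simp only [List.length_cons] at h2
      omega
    · rw [if_neg hc] at h
      injection h with h1 h2
      try exact h2
      try exact h2 ▸ hr

/-- characterization of reduced words via `Chain'` -/
lemma reduced_iff_chain {w : Word α} : Reduced w ↔ w.Chain' NR := by
  induction w with
  | nil => simp [Reduced, List.Chain']
  | cons x xs ih =>
    constructor
    · intro h
      have hxs := reduced_cons_down h
      have hchain := ih.mp hxs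
      cases xs with
      | nil => simp [List.Chain']
      | cons y ys =>
        rw [List.Chain', List.isChain_cons_cons]
        refine ⟨?_, hchain⟩
        unfold Reduced at h
        rw [FreeGroup.reduce.cons] at h
        rw [hxs] at h
        simp only at h
        by_cases hc : x.1 = y.1 ∧ x.2 = !y.2
        · rw [if_pos hc] at h
          exfalso
          have := congrArg List.length h
          simp at this
          omega
        · intro hcon
          apply hc
          rw [cancel_iff]
          rw [hcon]; simp
    · intro h
      cases xs with
      | nil => rfl
      | cons y ys =>
        rw [List.Chain', List.isChain_cons_cons] at h
        have hxs : Reduced (y :: ys) := ih.mpr h.2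
        unfold Reduced
        rw [FreeGroup.reduce.cons, hxs]
        simp only
        rw [if_neg]
        intro hc
        exact h.1 (by rw [cancel_iff] at hc; rw [hc]; simp)

lemma Reduced.infix {w l : Word α} (h : Reduced w) (hi : l <:+: w) : Reduced l :=
  reduced_iff_chain.mpr ((reduced_iff_chain.mp h).infix hi)

lemma reduced_reduce (w : Word α) : Reduced (FreeGroup.reduce w) :=
  FreeGroup.reduce.idem

/-- cyclically reduced words -/
def CycRed (w : Word α) : Prop := (w ++ w).Chain' NR

lemma CycRed.reduced {w : Word α} (h : CycRed w) : Reduced w :=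
  reduced_iff_chain.mpr (h.infix ⟨[], w, by simp⟩)

lemma CycRed.of_parts {w : Word α} (h1 : Reduced w)
    (h2 : ∀ x y, w.head? = some x → w.getLast? = some y → NR y x) : CycRed w := by
  rw [CycRed, List.Chain', List.isChain_append]
  exact ⟨reduced_iff_chain.mp h1, reduced_iff_chain.mp h1,
    fun y hy x hx => h2 x y hx hy⟩

lemma CycRed.junction {w : Word α} (h : CycRed w) :
    ∀ x y, w.head? = some x → w.getLast? = some y → NR y x := by
  intro x y hx hy
  rw [CycRed, List.Chain', List.isChain_append] at h
  exact h.2.2 y hy x hx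

lemma chain_ww_www {R : (α × Bool) → (α × Bool) → Prop} {w : Word α}
    (h : Chain' R (w ++ w)) : Chain' R (w ++ (w ++ w)) := by
  rcases List.isChain_append.mp h with ⟨h1, -, h3⟩
  refine List.isChain_append.mpr ⟨h1, h, fun x hx y hy => h3 x hx y ?_⟩
  cases w with
  | nil => simp at hy
  | cons z zs => simpa using hy

/-- rotations of cyclically reduced words are cyclically reduced -/
lemma CycRed.rotate {a b : Word α} (h : CycRed (a ++ b)) : CycRed (b ++ a) := by
  unfold CycRed at *
  exact (chain_ww_www h).infix ⟨a, b, by simp⟩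
lemma reduced_infix {w l : Word α} (h : Reduced w) (hi : l <:+: w) : Reduced l :=
  reduced_iff_chain.mpr ((reduced_iff_chain.mp h).infix hi)

lemma mk_wInv (a : Word α) : FreeGroup.mk (wInv a) = (FreeGroup.mk a)⁻¹ :=
  (FreeGroup.inv_mk).symm

lemma mk_append (a b : Word α) : FreeGroup.mk (a ++ b) = FreeGroup.mk a * FreeGroup.mk b :=
  (FreeGroup.mul_mk).symm

lemma mk_reduce (a : Word α) : FreeGroup.mk (FreeGroup.reduce a) = FreeGroup.mk a :=
  FreeGroup.reduce.self

/-- peel structure of `cyclicReduceAux` -/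
lemma aux_peel : ∀ (fuel : ℕ) (w : Word α), Reduced w → w.length ≤ fuel →
    ∃ t : Word α, CycRed (cyclicReduceAux fuel w) ∧
      w = t ++ cyclicReduceAux fuel w ++ wInv t := by
  intro fuel
  induction fuel with
  | zero =>
    intro w hred hlen
    have : w = [] := List.eq_nil_of_length_eq_zero (Nat.le_zero.mp hlen)
    subst this
    exact ⟨[], by simp [cyclicReduceAux, CycRed, List.Chain'], by simp [cyclicReduceAux]⟩
  | succ n ih =>
    intro w hred hlen
    match w with
    | [] => exact ⟨[], by simp [cyclicReduceAux, CycRed, List.Chain'], by simp [cyclicReduceAux]⟩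
    | x :: xs =>
      rw [show cyclicReduceAux (n+1) (x :: xs) =
        if xs.getLast? = some (x.1, !x.2) then cyclicReduceAux n xs.dropLast
        else x :: xs from rfl]
      by_cases hc : xs.getLast? = some (x.1, !x.2)
      · rw [if_pos hc]
        have hne : xs ≠ [] := by intro h; rw [h] at hc; simp at hc
        have hxs : xs = xs.dropLast ++ [(x.1, !x.2)] := by
          conv_lhs => rw [← List.dropLast_append_getLast hne]
          rw [List.getLast?_eq_getLast hne] at hc
          rw [Option.some_inj] at hc
          rw [hc]
        have hred' : Reduced xs.dropLast := by
          apply reduced_infix hred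
          refine ⟨[x], [(x.1, !x.2)], ?_⟩
          conv_rhs => rw [show x :: xs = [x] ++ xs from rfl, hxs]
          simp
        have hlen' : xs.dropLast.length ≤ n := by
          have h9 : xs.length = xs.dropLast.length + 1 := by
            conv_lhs => rw [hxs]
            simp
          have hl2 : xs.length + 1 ≤ n + 1 := by simpa using hlen
          omega
        obtain ⟨t', hcyc, hstruct⟩ := ih xs.dropLast hred' hlen'
        refine ⟨x :: t', hcyc, ?_⟩
        conv_lhs => rw [show x :: xs = [x] ++ xs from rfl, hxs, hstruct]
        rw [wInv_cons]
        have : [(x.1, !x.2)] = [invL x] := rfl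
        rw [this]
        simp
      · rw [if_neg hc]
        refine ⟨[], ?_, by simp⟩
        apply CycRed.of_parts hred
        intro a b ha hb
        have ha' : a = x := by
          have := ha
          simp only [List.head?_cons, Option.some_inj] at this
          exact this.symm
        subst ha'
        show ¬ (a = invL b)
        intro hcon
        cases xs with
        | nil =>
          have hb' : b = a := by
            have := hb
            simp only [List.getLast?_singleton, Option.some_inj] at this
            exact this.symm
          rw [hb'] at hcon
          cases a
          simp [invL] at hcon
        | cons y ys =>
          apply hc
          have hb' : (y :: ys).getLast? = some b := by
            rw [← hb]; rw [List.getLast?_cons_cons]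
          rw [hb']
          have hcon2 : invL a = b := invL_eq_iff.mpr hcon
          rw [← hcon2]
          rfl

lemma cyclicReduce_spec (w : Word α) :
    CycRed (cyclicReduce w) ∧
    ∃ t : Word α, FreeGroup.reduce w = t ++ cyclicReduce w ++ wInv t := by
  have h := aux_peel w.length (FreeGroup.reduce w) (reduced_reduce w) (reduced_length_le w)
  obtain ⟨t, h1, h2⟩ := h
  exact ⟨h1, t, h2⟩

lemma cycred_fixed {w : Word α} (h : CycRed w) : cyclicReduce w = w := by
  unfold cyclicReduce
  rw [h.reduced]
  cases w with
  | nil => rfl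
  | cons x xs =>
    rw [show (x :: xs).length = xs.length + 1 from rfl]
    rw [show cyclicReduceAux (xs.length+1) (x :: xs) =
      if xs.getLast? = some (x.1, !x.2) then cyclicReduceAux xs.length xs.dropLast
      else x :: xs from rfl]
    rw [if_neg]
    intro hc
    cases xs with
    | nil => simp at hc
    | cons y ys =>
      have hb : (x :: y :: ys).getLast? = some (x.1, !x.2) := by
        rw [List.getLast?_cons_cons]; exact hc
      have := h.junction x (x.1, !x.2) (by simp) hb
      apply this
      cases x
      simp [invL]

/-- maximal cancellation between two reduced words -/
lemma cancel_lemma : ∀ (U V : Word α), Reduced U → Reduced V →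
    ∃ A c B : Word α, U = A ++ c ∧ V = wInv c ++ B ∧ Reduced (A ++ B) := by
  intro U
  induction U using List.reverseRecOn with
  | nil =>
    intro V _ hV
    exact ⟨[], [], V, by simp, by simp, by simpa using hV⟩
  | append_singleton U' x ih =>
    intro V hU hV
    cases V with
    | nil =>
      exact ⟨U' ++ [x], [], [], by simp, by simp, by simpa using hU⟩
    | cons y V' =>
      by_cases hxy : y = invL x
      · have hU' : Reduced U' := reduced_infix hU ⟨[], [x], by simp⟩
        have hV' : Reduced V' := reduced_infix hV ⟨[y], [], by simp⟩
        obtain ⟨A, c, B, h1, h2, h3⟩ := ih V' hU' hV'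
        refine ⟨A, c ++ [x], B, by rw [h1]; simp, ?_, h3⟩
        rw [wInv_append, wInv_singleton, ← hxy]
        simp [h2]
      · refine ⟨U' ++ [x], [], y :: V', by simp, by simp, ?_⟩
        rw [reduced_iff_chain, show U' ++ [x] ++ (y :: V') = U' ++ ([x] ++ (y :: V')) by simp,
          List.Chain', List.isChain_append]
        refine ⟨(reduced_iff_chain.mp hU).infix ⟨[], [x], by simp⟩, ?_, ?_⟩
        · rw [List.isChain_append]
          refine ⟨by simp, reduced_iff_chain.mp hV, ?_⟩
          intro a ha b hb
          simp at ha hb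
          subst ha; subst hb
          exact fun hcon => hxy hcon
        · intro a ha b hb
          simp at hb
          subst hb
          have hU2 := reduced_iff_chain.mp hU
          rw [List.Chain', List.isChain_append] at hU2
          exact hU2.2.2 a ha x (by simp)

/-- suffix realization: any suffix of the reduced form is realizable (up to `mk`)
as a suffix of the original word -/
lemma suffix_realize : ∀ (x r s : Word α), FreeGroup.reduce x = r ++ s →
    ∃ x₁ x₂ : Word α, x = x₁ ++ x₂ ∧ FreeGroup.mk x₂ = FreeGroup.mk s := by
  intro x
  induction x with
  | nil =>
    intro r s h
    simp only [FreeGroup.reduce_nil] at h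
    obtain ⟨hr, hs⟩ := List.append_eq_nil_iff.mp h.symm
    exact ⟨[], [], by simp, by rw [hs]⟩
  | cons ℓ xs ih =>
    intro r s h
    have horig := h
    rw [FreeGroup.reduce.cons] at h
    cases hxs : FreeGroup.reduce xs with
    | nil =>
      rw [hxs] at h
      simp only at h
      cases r with
      | nil =>
        refine ⟨[], ℓ :: xs, by simp, ?_⟩
        rw [← mk_reduce (ℓ :: xs), horig]
        simp
      | cons a r' =>
        simp only [List.cons_append] at h
        injection h with h1 h2
        obtain ⟨hr', hs⟩ := List.append_eq_nil_iff.mp h2.symm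
        exact ⟨ℓ :: xs, [], by simp, by rw [hs]⟩
    | cons hd tl =>
      rw [hxs] at h
      simp only at h
      by_cases hc : ℓ.1 = hd.1 ∧ ℓ.2 = !hd.2
      · rw [if_pos hc] at h
        have : FreeGroup.reduce xs = (hd :: r) ++ s := by rw [hxs, h]; rfl
        obtain ⟨x₁, x₂, hsplit, hmk⟩ := ih (hd :: r) s this
        exact ⟨ℓ :: x₁, x₂, by rw [hsplit]; rfl, hmk⟩
      · rw [if_neg hc] at h
        cases r with
        | nil =>
          refine ⟨[], ℓ :: xs, by simp, ?_⟩
          rw [← mk_reduce (ℓ :: xs), horig]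
          simp
        | cons a r' =>
          simp only [List.cons_append] at h
          injection h with h1 h2
          have : FreeGroup.reduce xs = r' ++ s := by rw [hxs, h2]
          obtain ⟨x₁, x₂, hsplit, hmk⟩ := ih r' s this
          exact ⟨ℓ :: x₁, x₂, by rw [hsplit]; rfl, hmk⟩

lemma isCycPerm_refl (w : Word α) : IsCycPerm w w := ⟨[], w, by simp, by simp⟩

lemma isCycPerm_trans {u v t : Word α} (h1 : IsCycPerm u v) (h2 : IsCycPerm v t) :
    IsCycPerm u t := by
  obtain ⟨a, b, rfl, rfl⟩ := h1
  obtain ⟨c, d, hT, hv⟩ := h2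
  rcases List.append_eq_append_iff.mp hv with ⟨k, hk1, hk2⟩ | ⟨k, hk1, hk2⟩
  · exact ⟨c ++ a, k, by rw [hT, hk1]; simp, by rw [hk2]; simp⟩
  · exact ⟨k, b ++ d, by rw [hT, hk2]; simp, by rw [hk1]; simp⟩

lemma CycRed.of_cycPerm {p m : Word α} (hm : CycRed m) (h : IsCycPerm p m) : CycRed p := by
  obtain ⟨a, b, rfl, rfl⟩ := h
  exact hm.rotate
lemma mk_singleton_inv (x : α × Bool) :
    FreeGroup.mk [invL x] = (FreeGroup.mk [x])⁻¹ := by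
  rw [← wInv_singleton, mk_wInv]

lemma mk_hfh (h f : Word α) : FreeGroup.mk (h ++ f ++ wInv h)
    = FreeGroup.mk h * FreeGroup.mk f * (FreeGroup.mk h)⁻¹ := by
  rw [mk_append, mk_append, mk_wInv]

lemma mk_cons (x : α × Bool) (w : Word α) :
    FreeGroup.mk (x :: w) = FreeGroup.mk [x] * FreeGroup.mk w := by
  rw [show x :: w = [x] ++ w from rfl, mk_append]

lemma reduced_sandwich {x : α × Bool} {w : Word α} (hw : Reduced w) (hne : w ≠ [])
    (h1 : ∀ a, w.head? = some a → NR x a) (h2 : ∀ a, w.getLast? = some a → NR a (invL x)) :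
    Reduced ([x] ++ w ++ [invL x]) := by
  rw [reduced_iff_chain, show [x] ++ w ++ [invL x] = [x] ++ (w ++ [invL x]) by simp,
    List.Chain', List.isChain_append]
  refine ⟨by simp, ?_, ?_⟩
  · rw [List.isChain_append]
    refine ⟨reduced_iff_chain.mp hw, by simp, ?_⟩
    intro a ha b hb
    simp at hb
    subst hb
    exact h2 a ha
  · intro a ha b hb
    simp at ha
    subst ha
    cases w with
    | nil => exact absurd rfl hne
    | cons c cs =>
      have hbc : c = b := by
        have := hb
        rw [show (c :: cs) ++ [invL x] = c :: (cs ++ [invL x]) by simp] at this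
        simpa using this
      subst hbc
      exact h1 _ rfl

lemma conj_step (ℓ : α × Bool) {h f F : Word α} (hF : CycRed F)
    (hf : IsCycPerm f F) (hred : Reduced (h ++ f ++ wInv h)) :
    ∃ h' f' : Word α, IsCycPerm f' F ∧ Reduced (h' ++ f' ++ wInv h') ∧
      FreeGroup.mk (h' ++ f' ++ wInv h') =
        FreeGroup.mk [ℓ] * FreeGroup.mk (h ++ f ++ wInv h) * (FreeGroup.mk [ℓ])⁻¹ := by
  cases h with
  | cons a h2 =>
    have hsplit : (a :: h2) ++ f ++ wInv (a :: h2)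
        = [a] ++ (h2 ++ f ++ wInv h2) ++ [invL a] := by
      rw [wInv_cons]; simp
    by_cases hc : a = invL ℓ
    · refine ⟨h2, f, hf, reduced_infix hred ⟨[a], [invL a], by rw [hsplit]⟩, ?_⟩
      rw [mk_hfh, mk_hfh, mk_cons a h2, hc, mk_singleton_inv]
      group
    · refine ⟨ℓ :: (a :: h2), f, hf, ?_, ?_⟩
      · have hs2 : (ℓ :: (a :: h2)) ++ f ++ wInv (ℓ :: (a :: h2))
            = [ℓ] ++ ((a :: h2) ++ f ++ wInv (a :: h2)) ++ [invL ℓ] := by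
          rw [wInv_cons ℓ (a :: h2)]; simp
        rw [hs2]
        apply reduced_sandwich hred (by simp)
        · intro b hb
          have hba : a = b := by
            have := hb
            rw [show (a :: h2) ++ f ++ wInv (a :: h2) = a :: (h2 ++ f ++ wInv (a :: h2)) by simp]
              at this
            simpa using this
          subst hba
          exact fun hcon => hc hcon
        · intro b hb
          have hbia : b = invL a := by
            rw [hsplit] at hb
            rw [show [a] ++ (h2 ++ f ++ wInv h2) ++ [invL a]
              = ([a] ++ (h2 ++ f ++ wInv h2)) ++ [invL a] by simp, List.getLast?_concat] at hb
            exact (Option.some_inj.mp hb).symm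
          subst hbia
          show invL ℓ ≠ invL (invL a)
          rw [invL_invL]
          intro hcon
          exact hc hcon.symm
      · rw [mk_hfh, mk_hfh, mk_cons ℓ (a :: h2)]
        group
  | nil =>
    cases f with
    | nil =>
      refine ⟨[], [], hf, by simp [Reduced], ?_⟩
      simp only [List.append_nil, wInv_nil, List.nil_append]
      rw [← FreeGroup.one_eq_mk]
      group
    | cons g fs =>
      by_cases hc1 : g = invL ℓ
      · refine ⟨[], fs ++ [g], isCycPerm_trans ⟨[g], fs, rfl, rfl⟩ hf, ?_, ?_⟩
        · have : CycRed (fs ++ [g]) :=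
            CycRed.of_cycPerm hF (isCycPerm_trans ⟨[g], fs, rfl, rfl⟩ hf)
          simpa using this.reduced
        · simp only [List.append_nil, List.nil_append, wInv_nil]
          rw [mk_append, mk_cons g fs, hc1, mk_singleton_inv]
          group
      · by_cases hc2 : (g :: fs).getLast (by simp) = ℓ
        · have hfsplit : g :: fs = (g :: fs).dropLast ++ [ℓ] := by
            conv_lhs => rw [← List.dropLast_append_getLast (l := g :: fs) (by simp)]
            rw [hc2]
          refine ⟨[], ℓ :: (g :: fs).dropLast,
            isCycPerm_trans ⟨(g :: fs).dropLast, [ℓ], hfsplit, rfl⟩ hf, ?_, ?_⟩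
          · have : CycRed (ℓ :: (g :: fs).dropLast) :=
              CycRed.of_cycPerm hF (isCycPerm_trans ⟨(g :: fs).dropLast, [ℓ], hfsplit, rfl⟩ hf)
            simpa using this.reduced
          · simp only [List.append_nil, List.nil_append, wInv_nil]
            conv_rhs => rw [hfsplit]
            rw [mk_append, mk_cons ℓ ((g :: fs).dropLast)]
            group
        · refine ⟨[ℓ], g :: fs, hf, ?_, ?_⟩
          · rw [wInv_singleton]
            apply reduced_sandwich (by simpa using hred) (by simp)
            · intro b hb
              have hbg : g = b := by simpa using hb
              subst hbg
              exact fun hcon => hc1 hcon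
            · intro b hb
              have hbl : (g :: fs).getLast (by simp) = b := by
                rw [List.getLast?_eq_getLast (by simp), Option.some_inj] at hb
                exact hb
              show invL ℓ ≠ invL b
              intro hcon
              apply hc2
              rw [hbl]
              have h9 := congrArg invL hcon
              rw [invL_invL, invL_invL] at h9
              exact h9.symm
          · rw [mk_hfh]
            simp only [List.append_nil, List.nil_append, wInv_nil]

lemma conjform : ∀ (g : Word α) {F : Word α}, CycRed F →
    ∃ h f, IsCycPerm f F ∧ Reduced (h ++ f ++ wInv h) ∧
      FreeGroup.mk (h ++ f ++ wInv h) =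
        FreeGroup.mk g * FreeGroup.mk F * (FreeGroup.mk g)⁻¹ := by
  intro g
  induction g with
  | nil =>
    intro F hF
    refine ⟨[], F, isCycPerm_refl F, by simpa using hF.reduced, ?_⟩
    simp only [List.nil_append, List.append_nil, wInv_nil]
    rw [← FreeGroup.one_eq_mk]
    group
  | cons ℓ g' ih =>
    intro F hF
    obtain ⟨h, f, hf, hred, hmk⟩ := ih hF
    obtain ⟨h', f', hf', hred', hmk'⟩ := conj_step ℓ hF hf hred
    refine ⟨h', f', hf', hred', ?_⟩
    rw [hmk', hmk, mk_cons ℓ g']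
    group

/-- conjugate cyclically reduced words are cyclic permutations of each other -/
lemma conj_cycred_isCycPerm {x y : Word α} (hx : CycRed x) (hy : CycRed y)
    (g : FreeGroup α) (hc : FreeGroup.mk y = g * FreeGroup.mk x * g⁻¹) : IsCycPerm y x := by
  obtain ⟨h, f, hf, hred, hmk⟩ := conjform g.toWord hx
  have hmk2 : FreeGroup.mk (h ++ f ++ wInv h) = FreeGroup.mk y := by
    rw [hmk, FreeGroup.mk_toWord, ← hc]
  have heq : h ++ f ++ wInv h = y := by
    have h5 := FreeGroup.reduce.sound hmk2
    rw [hred, hy.reduced] at h5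
    exact h5
  cases h with
  | nil =>
    have : y = f := by rw [← heq]; simp
    rw [this]
    exact hf
  | cons a h2 =>
    exfalso
    have hhead : y.head? = some a := by rw [← heq]; rfl
    have hlast : y.getLast? = some (invL a) := by
      rw [← heq, wInv_cons, show (a :: h2) ++ f ++ (wInv h2 ++ [invL a])
        = ((a :: h2) ++ f ++ wInv h2) ++ [invL a] by simp, List.getLast?_concat]
    have := hy.junction a (invL a) hhead hlast
    apply this
    rw [invL_invL]
/-- the descent lemma: any `p · h f h⁻¹` configuration (rotations of `uh`, `F`)
can be conjugated into one which is empty-`h` or globally cyclically reduced -/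
lemma descent {uh F : Word α} (hu : CycRed uh) : ∀ (n : ℕ) (p h f : Word α), h.length ≤ n →
    IsCycPerm p uh → IsCycPerm f F →
    Reduced (h ++ f ++ wInv h) →
    ∃ p' h' f' : Word α, IsCycPerm p' uh ∧ IsCycPerm f' F ∧
      (∃ g : FreeGroup α, FreeGroup.mk (p' ++ (h' ++ f' ++ wInv h'))
        = g * FreeGroup.mk (p ++ (h ++ f ++ wInv h)) * g⁻¹) ∧
      (h' = [] ∨ CycRed (p' ++ (h' ++ f' ++ wInv h'))) := by
  intro n
  induction n with
  | zero =>
    intro p h f hlen hp hf hred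
    have : h = [] := List.eq_nil_of_length_eq_zero (Nat.le_zero.mp hlen)
    subst this
    exact ⟨p, [], f, hp, hf, ⟨1, by group⟩, Or.inl rfl⟩
  | succ n ih =>
    intro p h f hlen hp hf hred
    cases h with
    | nil => exact ⟨p, [], f, hp, hf, ⟨1, by group⟩, Or.inl rfl⟩
    | cons a h2 =>
      have hsplit : (a :: h2) ++ f ++ wInv (a :: h2)
          = [a] ++ (h2 ++ f ++ wInv h2) ++ [invL a] := by
        rw [wInv_cons]; simp
      have hred2 : Reduced (h2 ++ f ++ wInv h2) :=
        reduced_infix hred ⟨[a], [invL a], by rw [hsplit]⟩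
      have hlen2 : h2.length ≤ n := by
        simp only [List.length_cons] at hlen; omega
      cases hpe : p with
      | nil =>
        refine ⟨[], [], f, hpe ▸ hp, hf, ⟨(FreeGroup.mk (a :: h2))⁻¹, ?_⟩, Or.inl rfl⟩
        simp only [List.nil_append, wInv_nil, List.append_nil]
        rw [mk_hfh]
        group
      | cons b p2 =>
        rw [← hpe]
        have hpne : p ≠ [] := by rw [hpe]; simp
        set ℓp := p.getLast hpne with hℓp
        have hpsplit : p = p.dropLast ++ [ℓp] := by
          rw [hℓp]
          exact (List.dropLast_append_getLast hpne).symm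
        by_cases hc3 : ℓp = invL a
        · have hp2 : IsCycPerm (ℓp :: p.dropLast) uh :=
            isCycPerm_trans ⟨p.dropLast, [ℓp], hpsplit, rfl⟩ hp
          obtain ⟨p', h', f', hp', hf', ⟨g1, hg1⟩, hterm⟩ :=
            ih (ℓp :: p.dropLast) h2 f hlen2 hp2 hf hred2
          refine ⟨p', h', f', hp', hf', ⟨g1 * FreeGroup.mk [ℓp], ?_⟩, hterm⟩
          rw [hg1]
          conv_rhs => rw [hpsplit]
          rw [mk_append (ℓp :: p.dropLast), mk_cons ℓp p.dropLast,
            mk_append (p.dropLast ++ [ℓp]), mk_append p.dropLast [ℓp],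
            mk_hfh h2 f, mk_hfh (a :: h2) f, mk_cons a h2, hc3, mk_singleton_inv]
          group
        · by_cases hc4 : b = a
          · have hp2 : IsCycPerm (p2 ++ [b]) uh :=
              isCycPerm_trans ⟨[b], p2, hpe, rfl⟩ hp
            obtain ⟨p', h', f', hp', hf', ⟨g1, hg1⟩, hterm⟩ :=
              ih (p2 ++ [b]) h2 f hlen2 hp2 hf hred2
            refine ⟨p', h', f', hp', hf', ⟨g1 * (FreeGroup.mk [b])⁻¹, ?_⟩, hterm⟩
            rw [hg1]
            conv_rhs => rw [hpe]
            rw [mk_append (p2 ++ [b]), mk_append p2 [b], mk_hfh h2 f,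
              mk_append (b :: p2), mk_cons b p2, mk_hfh (a :: h2) f, mk_cons a h2, ← hc4]
            group
          · -- tight case
            refine ⟨p, a :: h2, f, hp, hf, ⟨1, by group⟩, Or.inr ?_⟩
            apply CycRed.of_parts
            · rw [reduced_iff_chain, List.Chain', List.isChain_append]
              refine ⟨reduced_iff_chain.mp ((CycRed.of_cycPerm hu hp).reduced), ?_, ?_⟩
              · exact reduced_iff_chain.mp hred
              · intro x hx y hy
                have hxl : x = ℓp := by
                  have h9 : p.getLast? = some x := by simpa using hx
                  rw [List.getLast?_eq_getLast hpne, Option.some_inj] at h9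
                  exact h9.symm
                have hya : a = y := by
                  rw [show (a :: h2) ++ f ++ wInv (a :: h2)
                    = a :: (h2 ++ f ++ wInv (a :: h2)) by simp] at hy
                  simpa using hy
                subst hxl
                rw [← hya]
                intro hcon
                apply hc3
                rw [hcon, invL_invL]
            · intro x y hx hy
              have hxb : b = x := by
                rw [hpe] at hx
                have h8 : (b :: p2) ++ ((a :: h2) ++ f ++ wInv (a :: h2))
                    = b :: (p2 ++ ((a :: h2) ++ f ++ wInv (a :: h2))) := by simp
                rw [h8] at hx
                simpa using hx
              have hyi : y = invL a := by
                rw [show p ++ ((a :: h2) ++ f ++ wInv (a :: h2))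
                  = (p ++ ((a :: h2) ++ f ++ wInv h2)) ++ [invL a] by rw [wInv_cons]; simp,
                  List.getLast?_concat, Option.some_inj] at hy
                exact hy.symm
              subst hyi
              rw [← hxb]
              show b ≠ invL (invL a)
              rw [invL_invL]
              exact hc4
/-- every rotation of the cyclic reduction of `u` is the reduction of a rotation of `u` -/
lemma rotation_realize {u p : Word α} (hp : IsCycPerm p (cyclicReduce u)) :
    ∃ u₀ : Word α, IsCycPerm u₀ u ∧ FreeGroup.reduce u₀ = p := by
  obtain ⟨hcyc, tu, hpeel⟩ := cyclicReduce_spec u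
  obtain ⟨a, b, hab, hp'⟩ := hp
  have hsplit : FreeGroup.reduce u = (tu ++ a) ++ (b ++ wInv tu) := by
    rw [hpeel, hab]; simp
  obtain ⟨u₁, u₂, hu, hmk⟩ := suffix_realize u _ _ hsplit
  refine ⟨u₂ ++ u₁, ⟨u₁, u₂, hu, rfl⟩, ?_⟩
  have hpred : Reduced p := (CycRed.of_cycPerm hcyc ⟨a, b, hab, hp'⟩).reduced
  have hmku : FreeGroup.mk u = FreeGroup.mk u₁ * FreeGroup.mk u₂ := by
    rw [← mk_append, ← hu]
  have hu1 : FreeGroup.mk u₁ = FreeGroup.mk u * (FreeGroup.mk u₂)⁻¹ := by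
    rw [hmku]; group
  have hmain : FreeGroup.mk (u₂ ++ u₁) = FreeGroup.mk p := by
    rw [mk_append, hu1, hmk, hp',
      show FreeGroup.mk u = FreeGroup.mk (FreeGroup.reduce u) from (mk_reduce u).symm,
      hsplit, mk_append, mk_append, mk_append, mk_append, mk_wInv, mk_append b a]
    group
  have := FreeGroup.reduce.sound hmain
  rw [hpred] at this
  exact this

/-- the common final assembly: from a conjugacy presentation of `e` produce the witnesses -/
lemma final_assembly {pbase q w e : Word α} (hecyc : CycRed e) (Ihat : FreeGroup α)
    (hconj : ∃ G : FreeGroup α, FreeGroup.mk e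
      = G * (FreeGroup.mk pbase * Ihat * FreeGroup.mk q * FreeGroup.mk w * Ihat⁻¹) * G⁻¹) :
    ∃ p f h : Word α,
      (∃ p₀ : Word α, IsCycPerm p₀ pbase ∧ p = FreeGroup.reduce p₀) ∧
      IsCycPerm f (crp q w) ∧
      IsCycPerm e (crp p (h ++ f ++ wInv h)) ∧
      (h ≠ [] → crp p (h ++ f ++ wInv h) = p ++ h ++ f ++ wInv h) := by
  obtain ⟨G, hG⟩ := hconj
  obtain ⟨hFcyc, tF, htF⟩ := cyclicReduce_spec (q ++ w)
  obtain ⟨hucyc, tu, htu⟩ := cyclicReduce_spec pbase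
  set uh := cyclicReduce pbase with huh
  set F := cyclicReduce (q ++ w) with hF
  obtain ⟨h₀, f₀, hf₀, hred₀, hmk₀⟩ :=
    conjform (wInv tu ++ (FreeGroup.toWord Ihat ++ tF)) hFcyc
  obtain ⟨p', h', f', hp', hf', ⟨g1, hg1⟩, hterm⟩ :=
    descent hucyc h₀.length uh h₀ f₀ (le_refl _) (isCycPerm_refl uh) hf₀ hred₀
  obtain ⟨p₀, hp₀, hp₀red⟩ := rotation_realize hp'
  -- key conjugacy chain
  have r1 : FreeGroup.mk uh = (FreeGroup.mk tu)⁻¹ * FreeGroup.mk pbase * FreeGroup.mk tu := by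
    rw [show FreeGroup.mk pbase = FreeGroup.mk (FreeGroup.reduce pbase) from (mk_reduce _).symm,
      htu, mk_append, mk_append, mk_wInv]
    group
  have r2 : FreeGroup.mk F
      = (FreeGroup.mk tF)⁻¹ * (FreeGroup.mk q * FreeGroup.mk w) * FreeGroup.mk tF := by
    rw [show FreeGroup.mk q * FreeGroup.mk w = FreeGroup.mk (q ++ w) from FreeGroup.mul_mk,
      show FreeGroup.mk (q ++ w) = FreeGroup.mk (FreeGroup.reduce (q ++ w)) from (mk_reduce _).symm,
      htF, mk_append, mk_append, mk_wInv]
    group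
  have r3 : FreeGroup.mk (wInv tu ++ (FreeGroup.toWord Ihat ++ tF))
      = (FreeGroup.mk tu)⁻¹ * (Ihat * FreeGroup.mk tF) := by
    rw [mk_append, mk_append, mk_wInv, FreeGroup.mk_toWord]
  have hchain : FreeGroup.mk e = (G * FreeGroup.mk tu * g1⁻¹)
      * FreeGroup.mk (p' ++ (h' ++ f' ++ wInv h'))
      * (G * FreeGroup.mk tu * g1⁻¹)⁻¹ := by
    rw [hg1, mk_append uh, hmk₀, r1, r2, r3, hG]
    group
  -- produce the results
  refine ⟨p', f', h', ⟨p₀, hp₀, hp₀red.symm⟩, hf', ?_, ?_⟩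
  · -- condition 4
    obtain ⟨hZcyc, sz, hsz⟩ := cyclicReduce_spec (p' ++ (h' ++ f' ++ wInv h'))
    have hZ : FreeGroup.mk (p' ++ (h' ++ f' ++ wInv h'))
        = FreeGroup.mk sz * FreeGroup.mk (crp p' (h' ++ f' ++ wInv h'))
          * (FreeGroup.mk sz)⁻¹ := by
      rw [show FreeGroup.mk (p' ++ (h' ++ f' ++ wInv h'))
          = FreeGroup.mk (FreeGroup.reduce (p' ++ (h' ++ f' ++ wInv h'))) from (mk_reduce _).symm,
        hsz, mk_append, mk_append, mk_wInv]
      rfl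
    have hfin : FreeGroup.mk e = (G * FreeGroup.mk tu * g1⁻¹ * FreeGroup.mk sz)
        * FreeGroup.mk (crp p' (h' ++ f' ++ wInv h'))
        * (G * FreeGroup.mk tu * g1⁻¹ * FreeGroup.mk sz)⁻¹ := by
      rw [hchain, hZ]
      group
    exact conj_cycred_isCycPerm hZcyc hecyc _ hfin
  · -- condition 5
    intro hne
    rcases hterm with h | hcr
    · exact absurd h hne
    · have : crp p' (h' ++ f' ++ wInv h') = p' ++ (h' ++ f' ++ wInv h') := cycred_fixed hcr
      rw [this]
      simp [List.append_assoc]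
end TA

open TA in
theorem twisted_associativity (u v w d : Word α) (hd : IsCycPerm d (crp u v)) :
    ∃ p q w' f h : Word α,
      ((∃ u₀ : Word α, IsCycPerm u₀ u ∧ p = FreeGroup.reduce u₀) ∧ IsCycPerm q v ∨
       (∃ v₀ : Word α, IsCycPerm v₀ v ∧ p = FreeGroup.reduce v₀) ∧ IsCycPerm q u) ∧
      IsCycPerm w' w ∧
      IsCycPerm f (crp q w') ∧
      IsCycPerm (crp d w) (crp p (h ++ f ++ wInv h)) ∧
      (h ≠ [] → crp p (h ++ f ++ wInv h) = p ++ h ++ f ++ wInv h) := by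
  obtain ⟨m₁, m₂, hm, hd2⟩ := hd
  have hm' : cyclicReduce (u ++ v) = m₁ ++ m₂ := hm
  obtain ⟨hmcyc, t, ht⟩ := cyclicReduce_spec (u ++ v)
  obtain ⟨A, c, B, hU, hV, hAB⟩ := cancel_lemma (FreeGroup.reduce u) (FreeGroup.reduce v)
    (reduced_reduce u) (reduced_reduce v)
  have hRuv : FreeGroup.reduce (u ++ v) = A ++ B := by
    have hmkeq : FreeGroup.mk (u ++ v) = FreeGroup.mk (A ++ B) := by
      rw [mk_append u v, mk_append A B,
        show FreeGroup.mk u = FreeGroup.mk (FreeGroup.reduce u) from (mk_reduce u).symm,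
        show FreeGroup.mk v = FreeGroup.mk (FreeGroup.reduce v) from (mk_reduce v).symm,
        hU, hV, mk_append, mk_append, mk_wInv]
      group
    have h9 := FreeGroup.reduce.sound hmkeq
    rw [hAB] at h9
    exact h9
  have hkey : A ++ B = (t ++ m₁) ++ (m₂ ++ wInv t) := by
    rw [← hRuv, ht, hm']; simp
  obtain ⟨hecyc, s, hs⟩ := cyclicReduce_spec (d ++ w)
  have h1 : FreeGroup.mk m₂ * FreeGroup.mk m₁ * FreeGroup.mk w
      = FreeGroup.mk s * FreeGroup.mk (crp d w) * (FreeGroup.mk s)⁻¹ := by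
    rw [← mk_append m₂ m₁, ← hd2, ← mk_append d w,
      show FreeGroup.mk (d ++ w) = FreeGroup.mk (FreeGroup.reduce (d ++ w))
        from (mk_reduce _).symm, hs, mk_append, mk_append, mk_wInv]
    rfl
  have rE : FreeGroup.mk (crp d w) = (FreeGroup.mk s)⁻¹
      * (FreeGroup.mk m₂ * FreeGroup.mk m₁ * FreeGroup.mk w) * FreeGroup.mk s := by
    rw [h1]; group
  rcases List.append_eq_append_iff.mp hkey with ⟨k, hk1, hk2⟩ | ⟨k, hk1, hk2⟩
  · -- Case 1: the split point lies in the v-side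
    have hVsplit : FreeGroup.reduce v = (wInv c ++ k) ++ (m₂ ++ wInv t) := by
      rw [hV, hk2]; simp
    obtain ⟨v₁, v₂, hvsplit, hv₂⟩ := suffix_realize v _ _ hVsplit
    have hq : IsCycPerm (v₂ ++ v₁) v := ⟨v₁, v₂, hvsplit, rfl⟩
    have hI : FreeGroup.mk v₂ = FreeGroup.mk m₂ * (FreeGroup.mk t)⁻¹ := by
      rw [hv₂, mk_append, mk_wInv]
    have rQ : FreeGroup.mk (v₂ ++ v₁) = (FreeGroup.mk m₂ * (FreeGroup.mk t)⁻¹)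
        * FreeGroup.mk v * (FreeGroup.mk m₂ * (FreeGroup.mk t)⁻¹)⁻¹ := by
      have hv1 : FreeGroup.mk v₁ = FreeGroup.mk v * (FreeGroup.mk v₂)⁻¹ := by
        rw [show FreeGroup.mk v = FreeGroup.mk v₁ * FreeGroup.mk v₂ by
          rw [← mk_append, ← hvsplit]]
        group
      rw [mk_append v₂ v₁, hv1, hI]
      group
    have rUV : FreeGroup.mk u * FreeGroup.mk v = FreeGroup.mk t
        * (FreeGroup.mk m₁ * FreeGroup.mk m₂) * (FreeGroup.mk t)⁻¹ := by
      rw [← mk_append u v,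
        show FreeGroup.mk (u ++ v) = FreeGroup.mk (FreeGroup.reduce (u ++ v))
          from (mk_reduce _).symm, ht, hm', mk_append, mk_append, mk_append, mk_wInv]
    have rv : FreeGroup.mk v = (FreeGroup.mk u)⁻¹
        * (FreeGroup.mk t * (FreeGroup.mk m₁ * FreeGroup.mk m₂) * (FreeGroup.mk t)⁻¹) := by
      rw [← rUV]; group
    have hconj : ∃ G : FreeGroup α, FreeGroup.mk (crp d w)
        = G * (FreeGroup.mk u * (FreeGroup.mk m₂ * (FreeGroup.mk t)⁻¹)⁻¹
          * FreeGroup.mk (v₂ ++ v₁) * FreeGroup.mk w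
          * ((FreeGroup.mk m₂ * (FreeGroup.mk t)⁻¹)⁻¹)⁻¹) * G⁻¹ := by
      refine ⟨(FreeGroup.mk s)⁻¹ * FreeGroup.mk m₂ * (FreeGroup.mk t)⁻¹, ?_⟩
      rw [rE, rQ, rv]
      group
    obtain ⟨p, f, h, hbranch, hf, h4, h5⟩ :=
      final_assembly hecyc ((FreeGroup.mk m₂ * (FreeGroup.mk t)⁻¹)⁻¹) hconj
    exact ⟨p, v₂ ++ v₁, w, f, h, Or.inl ⟨hbranch, hq⟩, isCycPerm_refl w, hf, h4, h5⟩
  · -- Case 2: the split point lies in the u-side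
    have hUsplit : FreeGroup.reduce u = (t ++ m₁) ++ (k ++ c) := by
      rw [hU, hk1]; simp
    obtain ⟨u₁, u₂, husplit, hu₂⟩ := suffix_realize u _ _ hUsplit
    have hq : IsCycPerm (u₂ ++ u₁) u := ⟨u₁, u₂, husplit, rfl⟩
    have hI : FreeGroup.mk u₂ = FreeGroup.mk k * FreeGroup.mk c := by
      rw [hu₂, mk_append]
    have rQ : FreeGroup.mk (u₂ ++ u₁) = (FreeGroup.mk k * FreeGroup.mk c)
        * FreeGroup.mk u * (FreeGroup.mk k * FreeGroup.mk c)⁻¹ := by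
      have hu1 : FreeGroup.mk u₁ = FreeGroup.mk u * (FreeGroup.mk u₂)⁻¹ := by
        rw [show FreeGroup.mk u = FreeGroup.mk u₁ * FreeGroup.mk u₂ by
          rw [← mk_append, ← husplit]]
        group
      rw [mk_append u₂ u₁, hu1, hI]
      group
    have rU2 : FreeGroup.mk u = FreeGroup.mk t * FreeGroup.mk m₁
        * FreeGroup.mk k * FreeGroup.mk c := by
      rw [show FreeGroup.mk u = FreeGroup.mk (FreeGroup.reduce u) from (mk_reduce _).symm,
        hUsplit, mk_append, mk_append, mk_append]
      group
    have rB : FreeGroup.mk B = (FreeGroup.mk k)⁻¹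
        * (FreeGroup.mk m₂ * (FreeGroup.mk t)⁻¹) := by
      have hk2m : FreeGroup.mk m₂ * (FreeGroup.mk t)⁻¹
          = FreeGroup.mk k * FreeGroup.mk B := by
        rw [← mk_wInv, ← mk_append, hk2, mk_append]
      rw [hk2m]; group
    have rv2 : FreeGroup.mk v = (FreeGroup.mk c)⁻¹
        * ((FreeGroup.mk k)⁻¹ * (FreeGroup.mk m₂ * (FreeGroup.mk t)⁻¹)) := by
      rw [show FreeGroup.mk v = FreeGroup.mk (FreeGroup.reduce v) from (mk_reduce _).symm,
        hV, mk_append, mk_wInv, rB]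
    have hconj : ∃ G : FreeGroup α, FreeGroup.mk (crp d w)
        = G * (FreeGroup.mk v * (FreeGroup.mk k * FreeGroup.mk c)⁻¹
          * FreeGroup.mk (u₂ ++ u₁) * FreeGroup.mk w
          * ((FreeGroup.mk k * FreeGroup.mk c)⁻¹)⁻¹) * G⁻¹ := by
      refine ⟨(FreeGroup.mk s)⁻¹ * (FreeGroup.mk k * FreeGroup.mk c), ?_⟩
      rw [rE, rQ, rU2, rv2]
      group
    obtain ⟨p, f, h, hbranch, hf, h4, h5⟩ :=
      final_assembly hecyc ((FreeGroup.mk k * FreeGroup.mk c)⁻¹) hconj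
    exact ⟨p, u₂ ++ u₁, w, f, h, Or.inr ⟨hbranch, hq⟩, isCycPerm_refl w, hf, h4, h5⟩
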